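/- Let 0<α<1, a>0, N a positive integer, h=a/N, grid points x_s = s·h, and let n ∈ {1,…,N}. For every continuously differentiable function φ:[0,x_n]→ℝ, the quadrature error of the fractional midpoint rule satisfies E_h(φ)(x_n) = h^{α+1} Σ_{j=1}^n τ_{n−j} φ'(x_{j−1/2}) + I^α(φ − q_h φ)(x_n), where q_h φ is the piecewise linear function defined by (q_h φ)(y) = φ(x_{j−1/2}) + (y − x_{j−1/2}) φ'(x_{j−1/2}) for x_{j−1} ≤ y < x_j (j = 1,…,n), with this definition extended to y = x_n in the case j = n. -/

import Mathlib

open Real MeasureTheory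

/-- Midpoint quadrature weights `ω_m = ((m+1)^α − m^α)/Γ(α+1)`. -/
noncomputable def omegaW (α : ℝ) (m : ℕ) : ℝ :=
  (((m : ℝ) + 1) ^ α - (m : ℝ) ^ α) / Real.Gamma (α + 1)

/-- Coefficients `τ_m = ((m+1)^{α+1} − m^{α+1})/Γ(α+2) − ((m+1)^α + m^α)/(2Γ(α+1))`. -/
noncomputable def tauW (α : ℝ) (m : ℕ) : ℝ :=
  (((m : ℝ) + 1) ^ (α + 1) - (m : ℝ) ^ (α + 1)) / Real.Gamma (α + 2)
    - (((m : ℝ) + 1) ^ α + (m : ℝ) ^ α) / (2 * Real.Gamma (α + 1))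

/-- Abel integral operator `(I^α φ)(x) = (1/Γ(α)) ∫₀ˣ (x−y)^{α−1} φ(y) dy`. -/
noncomputable def abelI (α : ℝ) (φ : ℝ → ℝ) (x : ℝ) : ℝ :=
  (1 / Real.Gamma α) * ∫ y in (0 : ℝ)..x, (x - y) ^ (α - 1) * φ y

/-- Piecewise linear interpolant: `(q_h φ)(y) = φ(x_{j−1/2}) + (y − x_{j−1/2}) φ'(x_{j−1/2})`
for `x_{j−1} ≤ y < x_j`, extended to `y = x_n` in the case `j = n`. -/
noncomputable def qhInterp (φ φd : ℝ → ℝ) (h : ℝ) (n : ℕ) (y : ℝ) : ℝ :=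
  let m : ℝ := if y = (n : ℝ) * h then (n : ℝ) * h - h / 2 else (⌊y / h⌋ : ℝ) * h + h / 2
  φ m + (y - m) * φd m

lemma intInt_rpow_sub {r : ℝ} (hr : -1 < r) (x a b : ℝ) :
    IntervalIntegrable (fun y => (x - y) ^ r) volume a b := by
  have := (intervalIntegral.intervalIntegrable_rpow' hr (a := x - a) (b := x - b)).comp_sub_left x
  simpa using this

lemma int_rpow_sub {r : ℝ} (hr : -1 < r) (x a b : ℝ) :
    ∫ y in a..b, (x - y) ^ r = ((x - a) ^ (r + 1) - (x - b) ^ (r + 1)) / (r + 1) := by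
  rw [intervalIntegral.integral_comp_sub_left (fun u => u ^ r) x,
    integral_rpow (Or.inl hr)]

lemma rpow_sub_one_mul {α : ℝ} (hα : α ≠ 0) (t : ℝ) (ht : 0 ≤ t) :
    t ^ (α - 1) * t = t ^ α := by
  rcases ht.eq_or_lt with h | h
  · rw [← h, Real.zero_rpow hα, mul_zero]
  · rw [← Real.rpow_add_one h.ne', sub_add_cancel]

lemma step_interval (α h : ℝ) (hα0 : 0 < α) (hα1 : α < 1) (hh : 0 < h)
    (n k : ℕ) (hk : k < n) (C D : ℝ) :
    ∫ y in ((k : ℝ) * h)..(((k : ℝ) + 1) * h),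
        ((n : ℝ) * h - y) ^ (α - 1) * (C + (y - ((k : ℝ) * h + h / 2)) * D)
      = Real.Gamma α * (h ^ α * omegaW α (n - (k + 1)) * C
          + h ^ (α + 1) * tauW α (n - (k + 1)) * D) := by
  have hΓ : 0 < Real.Gamma α := Real.Gamma_pos_of_pos hα0
  have hr : (-1 : ℝ) < α - 1 := by linarith
  have hr' : (-1 : ℝ) < α := by linarith
  set x : ℝ := (n : ℝ) * h with hx
  set m : ℝ := (k : ℝ) * h + h / 2 with hm
  set a : ℝ := (k : ℝ) * h with ha
  set b : ℝ := ((k : ℝ) + 1) * h with hb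
  have hkn : ((k : ℝ) + 1) ≤ (n : ℝ) := by exact_mod_cast hk
  have hbx : b ≤ x := by
    rw [hb, hx]; exact mul_le_mul_of_nonneg_right hkn hh.le
  have hab : a ≤ b := by rw [ha, hb]; nlinarith
  have hcong : ∀ y ∈ Set.uIcc a b,
      ((x - y) ^ (α - 1) * (C + (y - m) * D))
        = (C + (x - m) * D) * (x - y) ^ (α - 1) - D * (x - y) ^ α := by
    intro y hy
    rw [Set.uIcc_of_le hab] at hy
    have hyx : 0 ≤ x - y := by linarith [hy.2, hbx]
    have key := rpow_sub_one_mul (hα0.ne') (x - y) hyx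
    linear_combination (-D) * key
  rw [intervalIntegral.integral_congr hcong]
  have i1 := intInt_rpow_sub hr x a b
  have i2 := intInt_rpow_sub hr' x a b
  rw [intervalIntegral.integral_sub ((i1.const_mul _)) (i2.const_mul _),
    intervalIntegral.integral_const_mul, intervalIntegral.integral_const_mul,
    int_rpow_sub hr, int_rpow_sub hr']
  set M : ℕ := n - (k + 1) with hM
  have hMc : (M : ℝ) = (n : ℝ) - ((k : ℝ) + 1) := by
    rw [hM]; push_cast [Nat.cast_sub hk]; ring
  have hxa : x - a = ((M : ℝ) + 1) * h := by rw [hx, ha, hMc]; ring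
  have hxb : x - b = (M : ℝ) * h := by rw [hx, hb, hMc]; ring
  have hxm : x - m = ((M : ℝ) + 1 / 2) * h := by rw [hx, hm, hMc]; ring
  have hM0 : (0 : ℝ) ≤ (M : ℝ) := Nat.cast_nonneg M
  have hP1 : (x - a) ^ (α - 1 + 1) = ((M : ℝ) + 1) ^ α * h ^ α := by
    rw [hxa, sub_add_cancel, Real.mul_rpow (by linarith) hh.le]
  have hP2 : (x - b) ^ (α - 1 + 1) = (M : ℝ) ^ α * h ^ α := by
    rw [hxb, sub_add_cancel, Real.mul_rpow hM0 hh.le]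
  have hha : h ^ (α + 1) = h ^ α * h := Real.rpow_add_one hh.ne' α
  have hQ1 : (x - a) ^ (α + 1) = (((M : ℝ) + 1) * ((M : ℝ) + 1) ^ α) * (h ^ α * h) := by
    rw [hxa, Real.mul_rpow (by linarith) hh.le, Real.rpow_add_one (by linarith : (M:ℝ)+1 ≠ 0),
      ← hha, hha]; ring
  have hQ2 : (x - b) ^ (α + 1) = ((M : ℝ) * (M : ℝ) ^ α) * (h ^ α * h) := by
    rcases Nat.eq_zero_or_pos M with h0 | h0
    · have hz : x - b = 0 := by rw [hxb, h0]; simp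
      rw [hz, h0, Real.zero_rpow (by linarith : α + 1 ≠ 0)]; simp
    · have : (M : ℝ) ≠ 0 := by positivity
      rw [hxb, Real.mul_rpow hM0 hh.le, Real.rpow_add_one this, hha]; ring
  rw [hP1, hP2, hQ1, hQ2, hxm, hha]
  simp only [omegaW, tauW]
  have hΓ1 : Real.Gamma (α + 1) = α * Real.Gamma α := Real.Gamma_add_one hα0.ne'
  have hΓ2 : Real.Gamma (α + 2) = (α + 1) * (α * Real.Gamma α) := by
    rw [show α + 2 = (α + 1) + 1 by ring, Real.Gamma_add_one (by linarith), hΓ1]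
  have hM1 : ((M : ℝ) + 1) ^ (α + 1) = ((M : ℝ) + 1) * ((M : ℝ) + 1) ^ α := by
    rw [Real.rpow_add_one (by linarith : (M:ℝ)+1 ≠ 0)]; ring
  have hM2 : (M : ℝ) ^ (α + 1) = (M : ℝ) * (M : ℝ) ^ α := by
    rcases Nat.eq_zero_or_pos M with h0 | h0
    · simp [h0, Real.zero_rpow (by linarith : α + 1 ≠ 0)]
    · have : (M : ℝ) ≠ 0 := by positivity
      rw [Real.rpow_add_one this]; ring
  rw [hΓ1, hΓ2, hM1, hM2]
  field_simp [hα0.ne']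
  ring

theorem stmt_1 (α a : ℝ) (hα0 : 0 < α) (hα1 : α < 1) (ha : 0 < a)
    (N : ℕ) (hN : 0 < N) (h : ℝ) (hh : h = a / N)
    (n : ℕ) (hn1 : 1 ≤ n) (hnN : n ≤ N)
    (φ φd : ℝ → ℝ)
    (hder : ∀ y ∈ Set.Icc (0 : ℝ) ((n : ℝ) * h),
      HasDerivWithinAt φ (φd y) (Set.Icc (0 : ℝ) ((n : ℝ) * h)) y)
    (hcd : ContinuousOn φd (Set.Icc (0 : ℝ) ((n : ℝ) * h))) :
    abelI α φ ((n : ℝ) * h)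
        - h ^ α * ∑ j ∈ Finset.Icc 1 n, omegaW α (n - j) * φ ((j : ℝ) * h - h / 2)
      = h ^ (α + 1) * ∑ j ∈ Finset.Icc 1 n, tauW α (n - j) * φd ((j : ℝ) * h - h / 2)
        + abelI α (fun y => φ y - qhInterp φ φd h n y) ((n : ℝ) * h) := by
  have hh0 : 0 < h := by
    rw [hh]; exact div_pos ha (by exact_mod_cast hN)
  have hΓ : 0 < Real.Gamma α := Real.Gamma_pos_of_pos hα0
  have hr : (-1 : ℝ) < α - 1 := by linarith
  set x : ℝ := (n : ℝ) * h with hx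
  have hx0 : 0 ≤ x := by positivity
  set Q : ℝ → ℝ := qhInterp φ φd h n with hQ
  set g : ℕ → ℝ := fun k => (k : ℝ) * h with hg
  -- identification of Q on each Ico
  have hQeq : ∀ k : ℕ, k < n → ∀ y ∈ Set.Ico (g k) (g (k + 1)),
      Q y = φ ((k : ℝ) * h + h / 2) + (y - ((k : ℝ) * h + h / 2)) * φd ((k : ℝ) * h + h / 2) := by
    intro k hk y hy
    obtain ⟨hy1, hy2⟩ := hy
    have hkn : ((k : ℝ) + 1) ≤ (n : ℝ) := by exact_mod_cast hk
    have hgk1 : g (k + 1) = ((k : ℝ) + 1) * h := by rw [hg]; push_cast; ring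
    have hne : y ≠ (n : ℝ) * h := by
      have : y < ((k : ℝ) + 1) * h := by rwa [hgk1] at hy2
      have : y < (n : ℝ) * h := lt_of_lt_of_le this
        (mul_le_mul_of_nonneg_right hkn hh0.le)
      exact this.ne
    have hfl : ⌊y / h⌋ = (k : ℤ) := by
      rw [Int.floor_eq_iff]
      constructor
      · push_cast
        rw [le_div_iff₀ hh0]
        exact hy1
      · push_cast
        rw [div_lt_iff₀ hh0]
        rwa [hgk1] at hy2
    show qhInterp φ φd h n y = _
    simp only [qhInterp, if_neg hne, hfl]
    norm_num
  -- per-interval a.e. equality of integrands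
  have hae : ∀ k : ℕ, k < n →
      (fun y => (x - y) ^ (α - 1) * (φ ((k : ℝ) * h + h / 2)
          + (y - ((k : ℝ) * h + h / 2)) * φd ((k : ℝ) * h + h / 2)))
        =ᵐ[volume.restrict (Set.uIoc (g k) (g (k + 1)))]
      (fun y => (x - y) ^ (α - 1) * Q y) := by
    intro k hk
    have hne_ae : ∀ᵐ y : ℝ ∂volume.restrict (Set.uIoc (g k) (g (k + 1))),
        y ≠ g (k + 1) :=
      ae_restrict_of_ae (measure_eq_zero_iff_ae_notMem.mp (Real.volume_singleton))
    have hmem : ∀ᵐ y : ℝ ∂volume.restrict (Set.uIoc (g k) (g (k + 1))),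
        y ∈ Set.uIoc (g k) (g (k + 1)) := ae_restrict_mem measurableSet_uIoc
    filter_upwards [hne_ae, hmem] with y hy1 hy2
    have hgle : g k ≤ g (k + 1) := by
      rw [hg]; have : (k : ℝ) ≤ (k : ℝ) + 1 := by linarith
      push_cast; nlinarith
    rw [Set.uIoc_of_le hgle] at hy2
    have hyIco : y ∈ Set.Ico (g k) (g (k + 1)) :=
      ⟨hy2.1.le, lt_of_le_of_ne hy2.2 hy1⟩
    rw [hQeq k hk y hyIco]
  -- integrability on each subinterval
  have hLint : ∀ k : ℕ, k < n → IntervalIntegrable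
      (fun y => (x - y) ^ (α - 1) * Q y) volume (g k) (g (k + 1)) := by
    intro k hk
    refine IntervalIntegrable.congr_ae ?_ (hae k hk)
    exact (intInt_rpow_sub hr x _ _).mul_continuousOn (by fun_prop)
  -- value on each subinterval
  have hval : ∀ k ∈ Finset.range n,
      ∫ y in g k..g (k + 1), (x - y) ^ (α - 1) * Q y
        = Real.Gamma α * (h ^ α * omegaW α (n - (k + 1)) * φ ((k : ℝ) * h + h / 2)
            + h ^ (α + 1) * tauW α (n - (k + 1)) * φd ((k : ℝ) * h + h / 2)) := by
    intro k hk
    rw [Finset.mem_range] at hk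
    rw [← intervalIntegral.integral_congr_ae
      ((ae_restrict_iff' measurableSet_uIoc).mp (hae k hk) |>.mono (by tauto))]
    simp only [hg]
    push_cast
    exact step_interval α h hα0 hα1 hh0 n k hk _ _
  -- splitting the full integral
  have hsplit : ∑ k ∈ Finset.range n, ∫ y in g k..g (k + 1), (x - y) ^ (α - 1) * Q y
      = ∫ y in (0 : ℝ)..x, (x - y) ^ (α - 1) * Q y := by
    have := intervalIntegral.sum_integral_adjacent_intervals (a := g) (n := n)
      (fun k hk => hLint k hk)
    have hg0 : g 0 = 0 := by simp [hg]
    have hgn : g n = x := by simp [hg, hx]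
    rwa [hg0, hgn] at this
  -- integrability for linearity
  have hφc : ContinuousOn φ (Set.Icc 0 x) := fun y hy => (hder y hy).continuousWithinAt
  have hφint : IntervalIntegrable (fun y => (x - y) ^ (α - 1) * φ y) volume 0 x :=
    (intInt_rpow_sub hr x 0 x).mul_continuousOn (by rwa [Set.uIcc_of_le hx0])
  have hQint : IntervalIntegrable (fun y => (x - y) ^ (α - 1) * Q y) volume 0 x := by
    have := IntervalIntegrable.trans_iterate (a := g) (n := n)
      (fun k hk => hLint k hk)
    have hg0 : g 0 = 0 := by simp [hg]
    have hgn : g n = x := by simp [hg, hx]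
    rwa [hg0, hgn] at this
  -- linearity of abelI
  have hlin : abelI α (fun y => φ y - Q y) x
      = abelI α φ x - (1 / Real.Gamma α) * ∫ y in (0 : ℝ)..x, (x - y) ^ (α - 1) * Q y := by
    simp only [abelI, mul_sub]
    rw [← mul_sub, ← intervalIntegral.integral_sub hφint hQint]
  -- converting the sums
  have hsumconv : ∀ F : ℕ → ℝ → ℝ,
      (∑ j ∈ Finset.Icc 1 n, F (n - j) ((j : ℝ) * h - h / 2))
        = ∑ k ∈ Finset.range n, F (n - (k + 1)) ((k : ℝ) * h + h / 2) := by
    intro F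
    rw [← Finset.Ico_add_one_right_eq_Icc, Finset.sum_Ico_eq_sum_range]
    refine Finset.sum_congr (by norm_num) fun k _ => ?_
    congr 1
    · rw [Nat.add_comm 1 k]
    · push_cast; ring
  -- final computation
  have key : ∫ y in (0 : ℝ)..x, (x - y) ^ (α - 1) * Q y
      = Real.Gamma α * (h ^ α * ∑ j ∈ Finset.Icc 1 n, omegaW α (n - j) * φ ((j : ℝ) * h - h / 2)
        + h ^ (α + 1) * ∑ j ∈ Finset.Icc 1 n, tauW α (n - j) * φd ((j : ℝ) * h - h / 2)) := by
    rw [← hsplit, Finset.sum_congr rfl hval,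
      hsumconv (fun m y => omegaW α m * φ y), hsumconv (fun m y => tauW α m * φd y)]
    simp only [Finset.mul_sum, mul_add, ← Finset.sum_add_distrib]
    exact Finset.sum_congr rfl fun k _ => by ring
  rw [hlin, key]
  field_simp
  ring
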